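/- For a compound Poisson observation with pmf P(X = x|λ) = ∫ (λξ)^x e^{−λξ}/x! dν(ξ), where ν is a probability measure on (0,∞), the improper prior π(λ) = 1/λ and a single observation x_1 ≥ 1 yield a finite marginal: ∫_0^∞ P(X = x_1|λ) (1/λ) dλ = 1/x_1. -/

import Mathlib

open MeasureTheory

lemma inner_gamma (ξ : ℝ) (hξ : 0 < ξ) (x₁ : ℕ) (hx : 1 ≤ x₁) :
    ∫⁻ l in Set.Ioi (0 : ℝ),
        ENNReal.ofReal ((l * ξ) ^ x₁ * Real.exp (-(l * ξ)) / (Nat.factorial x₁ : ℝ))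
          * ENNReal.ofReal l⁻¹
      = ENNReal.ofReal (1 / (x₁ : ℝ)) := by
  have hcast : ((x₁ : ℝ) - 1) = ((x₁ - 1 : ℕ) : ℝ) := by
    push_cast [hx]; ring
  have hcongr : ∀ l ∈ Set.Ioi (0 : ℝ),
      ENNReal.ofReal ((l * ξ) ^ x₁ * Real.exp (-(l * ξ)) / (Nat.factorial x₁ : ℝ))
          * ENNReal.ofReal l⁻¹
        = ENNReal.ofReal ((ξ ^ x₁ / (Nat.factorial x₁ : ℝ)) *
            (l ^ ((x₁ : ℝ) - 1) * Real.exp (-(ξ * l)))) := by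
    intro l hl
    rw [Set.mem_Ioi] at hl
    rw [← ENNReal.ofReal_mul (by positivity)]
    congr 1
    rw [hcast, Real.rpow_natCast]
    have hpow : l ^ x₁ = l ^ (x₁ - 1) * l := by
      rw [← pow_succ, Nat.sub_add_cancel hx]
    rw [mul_pow, hpow, mul_comm l ξ]
    field_simp
  rw [setLIntegral_congr_fun measurableSet_Ioi hcongr]
  have hint : IntegrableOn
      (fun l : ℝ => (ξ ^ x₁ / (Nat.factorial x₁ : ℝ)) *
        (l ^ ((x₁ : ℝ) - 1) * Real.exp (-(ξ * l)))) (Set.Ioi 0) := by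
    apply Integrable.const_mul
    have := integrableOn_rpow_mul_exp_neg_mul_rpow
      (s := (x₁ : ℝ) - 1) (p := 1) (b := ξ) (by
        have : (1 : ℝ) ≤ (x₁ : ℝ) := by exact_mod_cast hx
        linarith) one_pos hξ
    refine this.congr_fun (fun l hl => ?_) measurableSet_Ioi
    simp only [Real.rpow_one]
    ring_nf
  rw [← ofReal_integral_eq_lintegral_ofReal hint]
  · congr 1
    rw [MeasureTheory.integral_const_mul,
      Real.integral_rpow_mul_exp_neg_mul_Ioi (by positivity : (0:ℝ) < (x₁ : ℝ)) hξ]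
    have hGamma : Real.Gamma (x₁ : ℝ) = ((x₁ - 1).factorial : ℝ) := by
      have : (x₁ : ℝ) = ((x₁ - 1 : ℕ) : ℝ) + 1 := by push_cast [hx]; ring
      rw [this]
      exact_mod_cast Real.Gamma_nat_eq_factorial (x₁ - 1)
    rw [hGamma, Real.rpow_natCast, one_div ξ, inv_pow]
    have hfact : (x₁.factorial : ℝ) = (x₁ : ℝ) * ((x₁ - 1).factorial : ℝ) := by
      obtain ⟨n, rfl⟩ : ∃ n, x₁ = n + 1 := ⟨x₁ - 1, (Nat.succ_pred_eq_of_pos hx).symm⟩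
      simp [Nat.factorial_succ]
    have hξ' : (ξ : ℝ) ^ x₁ ≠ 0 := by positivity
    have hx' : (x₁ : ℝ) ≠ 0 := by positivity
    have hf' : ((x₁ - 1).factorial : ℝ) ≠ 0 := by positivity
    field_simp [hfact]
    rw [hfact]; ring
  · filter_upwards [self_mem_ae_restrict (measurableSet_Ioi : MeasurableSet (Set.Ioi (0:ℝ)))]
      with l hl
    have hl' : 0 < l := hl
    positivity

theorem compound_poisson_marginal (ν : Measure ℝ) [IsProbabilityMeasure ν]
    (hν : ∀ᵐ ξ ∂ν, 0 < ξ) (x₁ : ℕ) (hx : 1 ≤ x₁) :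
    ∫⁻ l in Set.Ioi (0 : ℝ),
        (∫⁻ ξ, ENNReal.ofReal ((l * ξ) ^ x₁ * Real.exp (-(l * ξ)) / (Nat.factorial x₁ : ℝ)) ∂ν)
          * ENNReal.ofReal l⁻¹
      = ENNReal.ofReal (1 / (x₁ : ℝ)) := by
  have step1 : ∀ l : ℝ,
      (∫⁻ ξ, ENNReal.ofReal ((l * ξ) ^ x₁ * Real.exp (-(l * ξ)) / (Nat.factorial x₁ : ℝ)) ∂ν)
          * ENNReal.ofReal l⁻¹
        = ∫⁻ ξ, ENNReal.ofReal ((l * ξ) ^ x₁ * Real.exp (-(l * ξ)) / (Nat.factorial x₁ : ℝ))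
            * ENNReal.ofReal l⁻¹ ∂ν := by
    intro l
    rw [lintegral_mul_const' _ _ ENNReal.ofReal_ne_top]
  simp_rw [step1]
  rw [lintegral_lintegral_swap]
  · have : ∀ᵐ ξ ∂ν,
        (∫⁻ l in Set.Ioi (0 : ℝ),
          ENNReal.ofReal ((l * ξ) ^ x₁ * Real.exp (-(l * ξ)) / (Nat.factorial x₁ : ℝ))
            * ENNReal.ofReal l⁻¹)
          = ENNReal.ofReal (1 / (x₁ : ℝ)) := by
      filter_upwards [hν] with ξ hξ
      exact inner_gamma ξ hξ x₁ hx
    rw [lintegral_congr_ae this, lintegral_const, measure_univ, mul_one]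
  · apply Measurable.aemeasurable
    apply Measurable.mul
      (f := fun p : ℝ × ℝ => ENNReal.ofReal ((p.1 * p.2) ^ x₁ * Real.exp (-(p.1 * p.2)) / (Nat.factorial x₁ : ℝ)))
      (g := fun p : ℝ × ℝ => ENNReal.ofReal p.1⁻¹)
    · apply Measurable.ennreal_ofReal
      fun_prop
    · apply Measurable.ennreal_ofReal
      fun_prop
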